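/- Under the IV assumptions and positivity, the observed mean difference across instrument arms decomposes as E[Y | Z=1] − E[Y | Z=0] = Σ_{u∈𝒰} μ(U=u) · E[Y1 − Y0 | U=u] · ( E[D | Z=1, U=u] − E[D | Z=0, U=u] ). -/

import Mathlib

open MeasureTheory ProbabilityTheory

/-- Conditional mean of `W` given event `A`: `E[W | A] = (∫_A W dμ) / μ(A)`. -/
noncomputable def condMean {Ω : Type*} [MeasurableSpace Ω] (μ : Measure Ω)
    (W : Ω → ℝ) (A : Set Ω) : ℝ :=
  (∫ ω in A, W ω ∂μ) / (μ A).toReal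

/-- Product formula for an independent pair, where the second factor is a bounded
composition. -/
lemma indep_integral_mul {Ω : Type*} [MeasurableSpace Ω] (ν : Measure Ω)
    [IsProbabilityMeasure ν] (f : Ω → ℝ) (W : Ω → ℝ × ℝ) (g : ℝ × ℝ → ℝ)
    (hind : IndepFun f W ν) (hf : Integrable f ν) (hW : Measurable W) (hg : Measurable g)
    (hbd : ∀ ω, |g (W ω)| ≤ 1) :
    ∫ ω, f ω * g (W ω) ∂ν = (∫ ω, f ω ∂ν) * ∫ ω, g (W ω) ∂ν := by
  have h2 : IndepFun f (g ∘ W) ν := hind.comp measurable_id hg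
  have hint : Integrable (g ∘ W) ν := by
    refine Integrable.mono' (integrable_const 1) ((hg.comp hW).aestronglyMeasurable) ?_
    filter_upwards with ω
    simpa [Real.norm_eq_abs] using hbd ω
  exact IndepFun.integral_fun_mul_eq_mul_integral h2 hf.aestronglyMeasurable hint.aestronglyMeasurable

/-- The key per-stratum, per-arm identity. -/
lemma key_identity {Ω : Type*} [MeasurableSpace Ω] (μ : Measure Ω) [IsProbabilityMeasure μ]
    (Z D Y1 Y0 Y : Ω → ℝ) (s : Set Ω) (hsmeas : MeasurableSet s) (hspos : μ s ≠ 0)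
    (hZmeas : Measurable Z) (hDmeas : Measurable D)
    (hD01 : ∀ ω, D ω = 0 ∨ D ω = 1)
    (hY1int : Integrable Y1 μ) (hY0int : Integrable Y0 μ)
    (hYdef : ∀ ω, Y ω = D ω * Y1 ω + (1 - D ω) * Y0 ω)
    (h1 : IndepFun Y1 (fun ω => (Z ω, D ω)) (μ[|s]))
    (h0 : IndepFun Y0 (fun ω => (Z ω, D ω)) (μ[|s]))
    (z : ℝ) :
    (μ s).toReal * ∫ ω in ({ω | Z ω = z} ∩ s), Y ω ∂μ
      = (∫ ω in s, Y1 ω ∂μ) * (∫ ω in ({ω | Z ω = z} ∩ s), D ω ∂μ)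
        + (∫ ω in s, Y0 ω ∂μ)
          * ((μ ({ω | Z ω = z} ∩ s)).toReal - ∫ ω in ({ω | Z ω = z} ∩ s), D ω ∂μ) := by
  classical
  set ν := μ[|s] with hν
  have hνprob : IsProbabilityMeasure ν := cond_isProbabilityMeasure hspos
  have hAz : MeasurableSet {ω | Z ω = z} := hZmeas (measurableSet_singleton z)
  have hDbd : ∀ ω, |D ω| ≤ 1 := by
    intro ω; rcases hD01 ω with h | h <;> simp [h]
  -- conversion between ν-integrals and μ-integrals
  have hmsne : (μ s).toReal ≠ 0 := by
    simp [ENNReal.toReal_eq_zero_iff, hspos, measure_ne_top μ s]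
  have conv2 : ∀ (t : Set Ω), MeasurableSet t → ∀ (f : Ω → ℝ),
      ∫ ω in t, f ω ∂ν = (μ s).toReal⁻¹ * ∫ ω in (t ∩ s), f ω ∂μ := by
    intro t ht f
    have : ν.restrict t = ((μ s)⁻¹ : ENNReal) • μ.restrict (t ∩ s) := by
      rw [hν, ProbabilityTheory.cond, Measure.restrict_smul, Measure.restrict_restrict ht]
    rw [this, integral_smul_measure, ENNReal.toReal_inv]
    simp [smul_eq_mul]
  have conv1 : ∀ f : Ω → ℝ, ∫ ω, f ω ∂ν = (μ s).toReal⁻¹ * ∫ ω in s, f ω ∂μ := by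
    intro f
    have := conv2 Set.univ MeasurableSet.univ f
    simpa using this
  -- integrability under ν
  have hνle : ∀ f : Ω → ℝ, Integrable f μ → Integrable f ν := by
    intro f hf
    rw [hν, ProbabilityTheory.cond]
    exact (hf.restrict).smul_measure (ENNReal.inv_ne_top.mpr hspos)
  have hY1ν : Integrable Y1 ν := hνle Y1 hY1int
  have hY0ν : Integrable Y0 ν := hνle Y0 hY0int
  -- the two bounded compositions
  set g1 : ℝ × ℝ → ℝ := fun p => if p.1 = z then p.2 else 0 with hg1
  set g0 : ℝ × ℝ → ℝ := fun p => if p.1 = z then 1 - p.2 else 0 with hg0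
  have hsetz : MeasurableSet {p : ℝ × ℝ | p.1 = z} :=
    measurable_fst (measurableSet_singleton z)
  have hg1m : Measurable g1 := Measurable.ite hsetz measurable_snd measurable_const
  have hg0m : Measurable g0 :=
    Measurable.ite hsetz (measurable_const.sub measurable_snd) measurable_const
  have hWm : Measurable (fun ω => (Z ω, D ω)) := hZmeas.prodMk hDmeas
  have hg1bd : ∀ ω, |g1 (Z ω, D ω)| ≤ 1 := by
    intro ω; rcases hD01 ω with h | h <;> simp [hg1, h] <;> split <;> norm_num
  have hg0bd : ∀ ω, |g0 (Z ω, D ω)| ≤ 1 := by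
    intro ω; rcases hD01 ω with h | h <;> simp [hg0, h] <;> split <;> norm_num
  -- pointwise decomposition of the indicator of Y
  have hptwise : ∀ ω, Set.indicator {ω | Z ω = z} Y ω
      = Y1 ω * g1 (Z ω, D ω) + Y0 ω * g0 (Z ω, D ω) := by
    intro ω
    rw [Set.indicator_apply]
    simp only [Set.mem_setOf_eq, hg1, hg0, hYdef ω]
    split <;> ring
  -- product formulas
  have hP1 : ∫ ω, Y1 ω * g1 (Z ω, D ω) ∂ν
      = (∫ ω, Y1 ω ∂ν) * ∫ ω, g1 (Z ω, D ω) ∂ν :=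
    indep_integral_mul ν Y1 _ g1 h1 hY1ν hWm hg1m hg1bd
  have hP0 : ∫ ω, Y0 ω * g0 (Z ω, D ω) ∂ν
      = (∫ ω, Y0 ω ∂ν) * ∫ ω, g0 (Z ω, D ω) ∂ν :=
    indep_integral_mul ν Y0 _ g0 h0 hY0ν hWm hg0m hg0bd
  -- integrability of products under ν
  have hI1 : Integrable (fun ω => Y1 ω * g1 (Z ω, D ω)) ν := by
    have := hY1ν.bdd_mul ((hg1m.comp hWm).aestronglyMeasurable)
      (c := 1) (Filter.Eventually.of_forall fun ω => by simpa [Real.norm_eq_abs] using hg1bd ω)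
    simpa [mul_comm] using this
  have hI0 : Integrable (fun ω => Y0 ω * g0 (Z ω, D ω)) ν := by
    have := hY0ν.bdd_mul ((hg0m.comp hWm).aestronglyMeasurable)
      (c := 1) (Filter.Eventually.of_forall fun ω => by simpa [Real.norm_eq_abs] using hg0bd ω)
    simpa [mul_comm] using this
  -- compute the LHS integral under ν
  have hmain : ∫ ω in {ω | Z ω = z}, Y ω ∂ν
      = (∫ ω, Y1 ω ∂ν) * (∫ ω, g1 (Z ω, D ω) ∂ν)
        + (∫ ω, Y0 ω ∂ν) * (∫ ω, g0 (Z ω, D ω) ∂ν) := by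
    rw [← integral_indicator hAz]
    calc ∫ ω, Set.indicator {ω | Z ω = z} Y ω ∂ν
        = ∫ ω, (Y1 ω * g1 (Z ω, D ω) + Y0 ω * g0 (Z ω, D ω)) ∂ν := by
          exact integral_congr_ae (Filter.Eventually.of_forall hptwise)
      _ = ∫ ω, Y1 ω * g1 (Z ω, D ω) ∂ν + ∫ ω, Y0 ω * g0 (Z ω, D ω) ∂ν :=
          integral_add hI1 hI0
      _ = _ := by rw [hP1, hP0]
  -- rewrite each ν-integral in terms of μ-integrals
  have hDint : Integrable D μ := by
    refine Integrable.mono' (integrable_const 1) hDmeas.aestronglyMeasurable ?_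
    filter_upwards with ω
    simpa [Real.norm_eq_abs] using hDbd ω
  have hg1int : ∫ ω, g1 (Z ω, D ω) ∂ν
      = (μ s).toReal⁻¹ * ∫ ω in ({ω | Z ω = z} ∩ s), D ω ∂μ := by
    have heq : (fun ω => g1 (Z ω, D ω)) = Set.indicator {ω | Z ω = z} D := by
      funext ω; rw [Set.indicator_apply]; simp [hg1, Set.mem_setOf_eq]
    rw [heq, integral_indicator hAz, conv2 _ hAz]
  have hg0int : ∫ ω, g0 (Z ω, D ω) ∂ν
      = (μ s).toReal⁻¹
        * ((μ ({ω | Z ω = z} ∩ s)).toReal - ∫ ω in ({ω | Z ω = z} ∩ s), D ω ∂μ) := by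
    have heq : (fun ω => g0 (Z ω, D ω)) = Set.indicator {ω | Z ω = z} (fun ω => 1 - D ω) := by
      funext ω; rw [Set.indicator_apply]; simp [hg0, Set.mem_setOf_eq]
    rw [heq, integral_indicator hAz, conv2 _ hAz]
    congr 1
    rw [integral_sub (integrable_const 1).integrableOn hDint.integrableOn]
    simp [measure_ne_top, Measure.real]
  have hYν : ∫ ω in {ω | Z ω = z}, Y ω ∂ν
      = (μ s).toReal⁻¹ * ∫ ω in ({ω | Z ω = z} ∩ s), Y ω ∂μ := conv2 _ hAz Y
  rw [hYν, conv1 Y1, conv1 Y0, hg1int, hg0int] at hmain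
  have hms : (0:ℝ) < (μ s).toReal := lt_of_le_of_ne ENNReal.toReal_nonneg (Ne.symm hmsne)
  field_simp at hmain
  nlinarith [hmain, sq_nonneg ((μ s).toReal)]

theorem observed_mean_difference_decomposition
    {Ω : Type*} [MeasurableSpace Ω] (μ : Measure Ω) [IsProbabilityMeasure μ]
    {𝒰 : Type*} [Fintype 𝒰] [MeasurableSpace 𝒰] [MeasurableSingletonClass 𝒰]
    (Z D Y1 Y0 Y : Ω → ℝ) (U : Ω → 𝒰)
    (hZmeas : Measurable Z) (hDmeas : Measurable D) (hUmeas : Measurable U)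
    (hZ01 : ∀ ω, Z ω = 0 ∨ Z ω = 1) (hD01 : ∀ ω, D ω = 0 ∨ D ω = 1)
    (hY1int : Integrable Y1 μ) (hY0int : Integrable Y0 μ)
    (hYdef : ∀ ω, Y ω = D ω * Y1 ω + (1 - D ω) * Y0 ω)
    (hUpos : ∀ u : 𝒰, 0 < μ {ω | U ω = u})
    -- (A2) Z is independent of U
    (hA2 : ∀ (z : ℝ) (u : 𝒰),
      μ ({ω | Z ω = z} ∩ {ω | U ω = u}) = μ {ω | Z ω = z} * μ {ω | U ω = u})
    -- (A1′, A4) under μ(· | U = u), each potential outcome is independent of (Z, D)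
    (hA14one : ∀ u : 𝒰, IndepFun Y1 (fun ω => (Z ω, D ω)) (μ[|{ω | U ω = u}]))
    (hA14zero : ∀ u : 𝒰, IndepFun Y0 (fun ω => (Z ω, D ω)) (μ[|{ω | U ω = u}]))
    -- positivity
    (hPos : ∀ (z : ℝ), (z = 0 ∨ z = 1) → ∀ (u : 𝒰),
      0 < μ ({ω | Z ω = z} ∩ {ω | U ω = u})) :
    condMean μ Y {ω | Z ω = 1} - condMean μ Y {ω | Z ω = 0}
      = ∑ u : 𝒰, (μ {ω | U ω = u}).toReal
          * condMean μ (fun ω => Y1 ω - Y0 ω) {ω | U ω = u}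
          * (condMean μ D ({ω | Z ω = 1} ∩ {ω | U ω = u})
             - condMean μ D ({ω | Z ω = 0} ∩ {ω | U ω = u})) := by
  classical
  set s : 𝒰 → Set Ω := fun u => {ω | U ω = u} with hsdef
  have hsmeas : ∀ u, MeasurableSet (s u) := fun u => hUmeas (measurableSet_singleton u)
  have hAz : ∀ z : ℝ, MeasurableSet {ω | Z ω = z} := fun z => hZmeas (measurableSet_singleton z)
  -- Y is integrable
  have hDbd : ∀ ω, |D ω| ≤ 1 := by intro ω; rcases hD01 ω with h | h <;> simp [h]
  have hYint : Integrable Y μ := by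
    have hYeq : Y = fun ω => D ω * Y1 ω + (1 - D ω) * Y0 ω := funext hYdef
    rw [hYeq]
    refine Integrable.add ?_ ?_
    · exact hY1int.bdd_mul hDmeas.aestronglyMeasurable
        (c := 1) (Filter.Eventually.of_forall fun ω => by simpa [Real.norm_eq_abs] using hDbd ω)
    · refine hY0int.bdd_mul (aestronglyMeasurable_const.sub hDmeas.aestronglyMeasurable)
        (c := 2) (Filter.Eventually.of_forall fun ω => ?_)
      rcases hD01 ω with h | h <;> simp [h] <;> norm_num
  -- partition of a set integral over the fibers of U
  have hpart : ∀ (f : Ω → ℝ), Integrable f μ → ∀ (A : Set Ω), MeasurableSet A →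
      ∫ ω in A, f ω ∂μ = ∑ u : 𝒰, ∫ ω in A ∩ s u, f ω ∂μ := by
    intro f hf A hA
    have hAU : A = ⋃ u : 𝒰, A ∩ s u := by
      ext ω; simp [hsdef]
    have hdisj : Pairwise (Function.onFun Disjoint fun u => A ∩ s u) := by
      intro u v huv
      refine Set.disjoint_left.mpr ?_
      rintro ω ⟨-, h1⟩ ⟨-, h2⟩
      exact huv ((h1 : U ω = u).symm.trans h2)
    calc ∫ ω in A, f ω ∂μ = ∫ ω in ⋃ u : 𝒰, A ∩ s u, f ω ∂μ := by rw [← hAU]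
      _ = ∑' u : 𝒰, ∫ ω in A ∩ s u, f ω ∂μ :=
          integral_iUnion (fun u => hA.inter (hsmeas u)) hdisj (hf.integrableOn)
      _ = ∑ u : 𝒰, ∫ ω in A ∩ s u, f ω ∂μ := tsum_fintype _
  -- positivity facts
  have hms : ∀ u, (0:ℝ) < (μ (s u)).toReal := fun u =>
    ENNReal.toReal_pos (hUpos u).ne' (measure_ne_top μ _)
  have hOne : Nonempty Ω := by
    by_contra h
    rw [not_nonempty_iff] at h
    have h2 := measure_univ (μ := μ)
    rw [Set.univ_eq_empty_iff.mpr h] at h2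
    simp at h2
  have hmz : ∀ z : ℝ, (z = 0 ∨ z = 1) → (0:ℝ) < (μ {ω | Z ω = z}).toReal := by
    intro z hz
    have h1 : 0 < μ {ω | Z ω = z} :=
      lt_of_lt_of_le (hPos z hz (U (Classical.arbitrary Ω)))
        (measure_mono Set.inter_subset_left)
    exact ENNReal.toReal_pos h1.ne' (measure_ne_top μ _)
  -- per-stratum key identities
  have hkey : ∀ (z : ℝ) (u : 𝒰),
      (μ (s u)).toReal * ∫ ω in ({ω | Z ω = z} ∩ s u), Y ω ∂μ
        = (∫ ω in s u, Y1 ω ∂μ) * (∫ ω in ({ω | Z ω = z} ∩ s u), D ω ∂μ)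
          + (∫ ω in s u, Y0 ω ∂μ)
            * ((μ ({ω | Z ω = z} ∩ s u)).toReal - ∫ ω in ({ω | Z ω = z} ∩ s u), D ω ∂μ) :=
    fun z u => key_identity μ Z D Y1 Y0 Y (s u) (hsmeas u) (hUpos u).ne' hZmeas hDmeas hD01
      hY1int hY0int hYdef (hA14one u) (hA14zero u) z
  -- product structure of joint measures
  have hmzu : ∀ (z : ℝ) (u : 𝒰), (μ ({ω | Z ω = z} ∩ s u)).toReal
      = (μ {ω | Z ω = z}).toReal * (μ (s u)).toReal := by
    intro z u
    rw [hsdef, hA2 z u, ENNReal.toReal_mul]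
  -- now assemble
  unfold condMean
  rw [hpart Y hYint _ (hAz 1), hpart Y hYint _ (hAz 0), Finset.sum_div, Finset.sum_div,
    ← Finset.sum_sub_distrib]
  refine Finset.sum_congr rfl ?_
  intro u _
  rw [show {ω | U ω = u} = s u from rfl]
  simp only [integral_sub hY1int.integrableOn hY0int.integrableOn]
  set a1 := ∫ ω in s u, Y1 ω ∂μ
  set a0 := ∫ ω in s u, Y0 ω ∂μ
  set d1 := ∫ ω in ({ω | Z ω = 1} ∩ s u), D ω ∂μ
  set d0 := ∫ ω in ({ω | Z ω = 0} ∩ s u), D ω ∂μ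
  set I1 := ∫ ω in ({ω | Z ω = 1} ∩ s u), Y ω ∂μ
  set I0 := ∫ ω in ({ω | Z ω = 0} ∩ s u), Y ω ∂μ
  have hk1 := hkey 1 u
  have hk0 := hkey 0 u
  rw [hmzu 1 u] at hk1
  rw [hmzu 0 u] at hk0
  rw [hmzu 1 u, hmzu 0 u]
  have hm1 := hmz 1 (Or.inr rfl)
  have hm0 := hmz 0 (Or.inl rfl)
  have hmu := hms u
  have hI1' : I1 = (a1 * d1 + a0 * ((μ {ω | Z ω = 1}).toReal * (μ (s u)).toReal - d1))
      / (μ (s u)).toReal := by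
    rw [eq_div_iff hmu.ne']
    linarith [hk1]
  have hI0' : I0 = (a1 * d0 + a0 * ((μ {ω | Z ω = 0}).toReal * (μ (s u)).toReal - d0))
      / (μ (s u)).toReal := by
    rw [eq_div_iff hmu.ne']
    linarith [hk0]
  rw [hI1', hI0']
  field_simp
  ring
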